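/- For probability measures P and Q on a measurable space with P ≪ Q, the essential supremum of dP/dQ with respect to P equals the essential supremum of dP/dQ with respect to Q. -/
import Mathlib


open MeasureTheory

theorem essSup_rnDeriv_left_eq_right
    {Ω : Type*} [MeasurableSpace Ω] (P Q : Measure Ω)
    [IsProbabilityMeasure P] [IsProbabilityMeasure Q] (h : P ≪ Q) :
    essSup (P.rnDeriv Q) P = essSup (P.rnDeriv Q) Q := by
  set f := P.rnDeriv Q with hf
  have hfm : Measurable f := Measure.measurable_rnDeriv P Q
  refine le_antisymm (essSup_mono_measure h) ?_
  set c := essSup f P with hc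
  refine essSup_le_of_ae_le c ?_
  set A : Set Ω := {x | c < f x} with hA
  have hAm : MeasurableSet A := measurableSet_lt measurable_const hfm
  have hPA : P A = 0 := by
    have := ae_lt_of_essSup_lt (α := Ω) (μ := P) (f := f) (x := c)
    have h1 : f ≤ᵐ[P] fun _ => c := ae_le_essSup (μ := P) (f := f)
    have : ∀ᵐ x ∂P, x ∉ A := by
      filter_upwards [h1] with x hx
      simpa [hA] using hx
    simpa [ae_iff, hA] using this
  have hint : ∫⁻ x in A, f x ∂Q = 0 := by
    rw [Measure.setLIntegral_rnDeriv h A]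
    exact hPA
  have hQA : Q A = 0 := by
    rw [lintegral_eq_zero_iff hfm] at hint
    have : ∀ᵐ x ∂(Q.restrict A), x ∉ A := by
      filter_upwards [hint] with x hx
      intro hxA
      have : c < f x := hxA
      simp [hx] at this
    rw [ae_restrict_iff' hAm] at this
    simpa [ae_iff] using this
  exact (ae_iff).mpr (by simpa [hA, not_le] using hQA)
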